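/- In ℚ[y₁,…,y₄], neither the polynomial Σ_{1≤i<j≤4} y_i² y_j² nor the polynomial (7/4)·Σ_{i=1}^4 y_i⁴ + (5/2)·Σ_{1≤i<j≤4} y_i² y_j² belongs to the ideal generated by y₁²+y₂²+y₃²+y₄². -/

import Mathlib

open MvPolynomial

private lemma aux_eval (v : Fin 4 → ℂ) (p : MvPolynomial (Fin 4) ℚ)
    (hf : aeval v (∑ i : Fin 4, X i ^ 2 : MvPolynomial (Fin 4) ℚ) = 0)
    (hp : aeval v p ≠ 0) :
    p ∉ Ideal.span {(∑ i : Fin 4, X i ^ 2 : MvPolynomial (Fin 4) ℚ)} := by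
  intro hmem
  rw [Ideal.mem_span_singleton] at hmem
  have := map_dvd (aeval v) hmem
  rw [hf] at this
  exact hp (zero_dvd_iff.mp this)

/-- In `ℚ[y₁,…,y₄]`, neither `Σ_{i<j} yᵢ²yⱼ²` nor
`(7/4)·Σ yᵢ⁴ + (5/2)·Σ_{i<j} yᵢ²yⱼ²` belongs to the ideal generated by
`y₁²+y₂²+y₃²+y₄²`. -/
theorem not_mem_span_sum_squares_F4 :
    ((∑ i : Fin 4, ∑ j ∈ Finset.Ioi i, X i ^ 2 * X j ^ 2 : MvPolynomial (Fin 4) ℚ)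
        ∉ Ideal.span {(∑ i : Fin 4, X i ^ 2 : MvPolynomial (Fin 4) ℚ)})
    ∧ ((C (7 / 4 : ℚ) * (∑ i : Fin 4, X i ^ 4)
        + C (5 / 2 : ℚ) * ∑ i : Fin 4, ∑ j ∈ Finset.Ioi i, X i ^ 2 * X j ^ 2)
        ∉ Ideal.span {(∑ i : Fin 4, X i ^ 2 : MvPolynomial (Fin 4) ℚ)}) := by
  have hIoi : ∀ i : Fin 4, Finset.Ioi i = (Finset.univ.filter (fun j => i < j)) := by
    decide
  set v : Fin 4 → ℂ := ![1, Complex.I, 0, 0] with hv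
  have hf : aeval v (∑ i : Fin 4, X i ^ 2 : MvPolynomial (Fin 4) ℚ) = 0 := by
    simp [Fin.sum_univ_four, hv, Complex.I_sq]
  constructor
  · refine aux_eval v _ hf ?_
    simp only [map_sum, map_mul, map_pow, aeval_X]
    rw [Fin.sum_univ_four]
    norm_num [hIoi, Finset.sum_filter, Fin.sum_univ_four, hv, Complex.I_sq]
    simp [Fin.lt_def, Matrix.cons_val]
  · refine aux_eval v _ hf ?_
    simp only [map_add, map_sum, map_mul, map_pow, aeval_X, aeval_C]
    rw [Fin.sum_univ_four]
    intro h
    simp only [hIoi] at h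
    simp [Finset.sum_filter, Fin.sum_univ_four, hv, Complex.I_sq, Complex.ext_iff] at h
    norm_num at h
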